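/- Let d ≥ 1 and let F ∈ ℂ[x_0,x_1] be a non-zero binary form of degree d. Then rk(F) ≤ d, i.e. F can be written as a sum of at most d d-th powers of linear forms in x_0,x_1. -/

import Mathlib

open MvPolynomial

/-- The Waring rank of a form `P` of degree `d`: the least `r` such that
`P = L₁^d + ⋯ + L_r^d` for some linear forms `L i`. -/
noncomputable def waringRank {σ : Type*} (d : ℕ) (P : MvPolynomial σ ℂ) : ℕ :=
  sInf {r : ℕ | ∃ L : Fin r → MvPolynomial σ ℂ,
    (∀ i, (L i).IsHomogeneous 1) ∧ P = ∑ i, (L i) ^ d}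

namespace WaringAux

/-- exponent vector for x^(d-k) y^k -/
noncomputable def ex (d k : ℕ) : Fin 2 →₀ ℕ := Finsupp.single 0 (d - k) + Finsupp.single 1 k

@[simp] lemma ex_zero (d k : ℕ) : ex d k 0 = d - k := by
  simp [ex, Finsupp.single_apply]

@[simp] lemma ex_one (d k : ℕ) : ex d k 1 = k := by
  simp [ex, Finsupp.single_apply]

lemma degree_fin2 (ν : Fin 2 →₀ ℕ) : ν.degree = ν 0 + ν 1 := by
  rw [Finsupp.degree_apply, Finset.sum_subset (Finset.subset_univ ν.support)]
  · exact Fin.sum_univ_two ν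
  · intro x _ hx
    simpa using (Finsupp.notMem_support_iff.mp hx)

lemma degree_ex {d k : ℕ} (h : k ≤ d) : (ex d k).degree = d := by
  rw [degree_fin2]
  simp [Nat.sub_add_cancel h]

lemma eq_ex_of_degree {d : ℕ} {ν : Fin 2 →₀ ℕ} (h : ν.degree = d) : ν = ex d (ν 1) := by
  rw [degree_fin2] at h
  ext i
  fin_cases i
  · simpa using by omega
  · simp

theorem decomp {d : ℕ} {G : MvPolynomial (Fin 2) ℂ} (hG : G.IsHomogeneous d) :
    G = ∑ k ∈ Finset.range (d + 1), monomial (ex d k) (G.coeff (ex d k)) := by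
  ext ν
  rw [coeff_sum]
  simp only [coeff_monomial]
  by_cases hν : ν.degree = d
  · have hν1 : ν 1 ≤ d := by
      rw [degree_fin2] at hν; omega
    have hexν : ν = ex d (ν 1) := eq_ex_of_degree hν
    rw [Finset.sum_eq_single (ν 1)]
    · rw [if_pos hexν.symm, ← hexν]
    · intro k _ hk
      rw [if_neg]
      intro hc
      exact hk (by simpa using congrArg (fun f : Fin 2 →₀ ℕ => f 1) (hc.trans hexν))
    · intro hmem
      exact absurd (Finset.mem_range.mpr (Nat.lt_succ_of_le hν1)) hmem
  · rw [hG.coeff_eq_zero hν, Finset.sum_eq_zero]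
    intro k hk
    rw [if_neg]
    rintro rfl
    exact hν (degree_ex (Nat.lt_succ_iff.mp (Finset.mem_range.mp hk)))

/-- The univariate "dehomogenization" x ↦ Z, y ↦ 1. -/
noncomputable def theta : MvPolynomial (Fin 2) ℂ →ₐ[ℂ] Polynomial ℂ :=
  aeval ![Polynomial.X, 1]

theorem bridge {d : ℕ} {G : MvPolynomial (Fin 2) ℂ} (hG : G.IsHomogeneous d)
    {k : ℕ} (hk : k ≤ d) : G.coeff (ex d k) = (theta G).coeff (d - k) := by
  conv_rhs => rw [decomp hG]
  rw [map_sum, Polynomial.finset_sum_coeff]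
  have hmon : ∀ m : ℕ, theta (monomial (ex d m) (G.coeff (ex d m)))
      = Polynomial.C (G.coeff (ex d m)) * Polynomial.X ^ (d - m) := by
    intro m
    rw [theta, aeval_monomial, ex]
    rw [Finsupp.prod_add_index' (fun i => pow_zero _) (fun i e1 e2 => pow_add _ e1 e2)]
    simp [Finsupp.prod_single_index, algebraMap_eq]
  simp only [hmon, Polynomial.coeff_C_mul, Polynomial.coeff_X_pow]
  rw [Finset.sum_eq_single k]
  · simp
  · intro m hm hmk
    have : ¬ (d - m = d - k) := by
      have := Finset.mem_range.mp hm; omega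
    rw [if_neg (fun h => this h.symm), mul_zero]
  · intro h
    exact absurd (Finset.mem_range.mpr (Nat.lt_succ_of_le hk)) h

theorem eval_homog {d : ℕ} {G : MvPolynomial (Fin 2) ℂ} (hG : G.IsHomogeneous d) (a b : ℂ) :
    eval ![a, b] G = ∑ k ∈ Finset.range (d + 1), G.coeff (ex d k) * a ^ (d - k) * b ^ k := by
  conv_lhs => rw [decomp hG]
  rw [map_sum]
  refine Finset.sum_congr rfl fun k _ => ?_
  rw [eval_monomial, ex]
  rw [Finsupp.prod_add_index' (fun i => pow_zero _) (fun i e1 e2 => pow_add _ e1 e2)]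
  simp [Finsupp.prod_single_index, mul_assoc, ex]

lemma coeff_CXC_pow (a b : ℂ) (d j : ℕ) :
    ((Polynomial.C a * Polynomial.X + Polynomial.C b) ^ d).coeff j
      = (d.choose j : ℂ) * a ^ j * b ^ (d - j) := by
  rw [add_pow, Polynomial.finset_sum_coeff]
  have hterm : ∀ m : ℕ,
      ((Polynomial.C a * Polynomial.X) ^ m * Polynomial.C b ^ (d - m) * (d.choose m : Polynomial ℂ))
      = Polynomial.C ((d.choose m : ℂ) * a ^ m * b ^ (d - m)) * Polynomial.X ^ m := by
    intro m
    rw [mul_pow, ← Polynomial.C_pow, ← Polynomial.C_pow, ← Polynomial.C_eq_natCast]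
    rw [mul_right_comm, mul_assoc, ← Polynomial.C_mul, mul_comm (Polynomial.C (a^m)),
      mul_assoc, ← Polynomial.C_mul]
    ring_nf
  simp only [hterm, Polynomial.coeff_C_mul, Polynomial.coeff_X_pow]
  by_cases hj : j ∈ Finset.range (d + 1)
  · rw [Finset.sum_eq_single j]
    · simp
    · intro m _ hm
      simp [Ne.symm hm]
    · intro h; exact absurd hj h
  · rw [Finset.sum_eq_zero, Nat.choose_eq_zero_of_lt, Nat.cast_zero, zero_mul, zero_mul]
    · simpa using hj
    · intro m hm
      have : m ≠ j := by
        rintro rfl; exact hj hm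
      simp [Ne.symm this]


/-- The linear form `a x + b y`. -/
noncomputable def lf (a b : ℂ) : MvPolynomial (Fin 2) ℂ := C a * X 0 + C b * X 1

lemma lf_homog (a b : ℂ) : (lf a b).IsHomogeneous 1 := by
  have h0 : (C a * X 0 : MvPolynomial (Fin 2) ℂ).IsHomogeneous 1 := by
    simpa using (isHomogeneous_C (Fin 2) a).mul (isHomogeneous_X ℂ 0)
  have h1 : (C b * X 1 : MvPolynomial (Fin 2) ℂ).IsHomogeneous 1 := by
    simpa using (isHomogeneous_C (Fin 2) b).mul (isHomogeneous_X ℂ 1)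
  exact h0.add h1

lemma theta_lf (a b : ℂ) : theta (lf a b) = Polynomial.C a * Polynomial.X + Polynomial.C b := by
  simp [theta, lf, algebraMap_eq]

lemma lf_ne_zero {a b : ℂ} (h : (a, b) ≠ (0, 0)) : lf a b ≠ 0 := by
  intro hlf
  have h1 := congrArg (fun q => Polynomial.coeff q 1) (congrArg theta hlf)
  have h0 := congrArg (fun q => Polynomial.coeff q 0) (congrArg theta hlf)
  rw [theta_lf] at h1 h0
  simp at h1 h0
  exact h (by rw [Prod.ext_iff]; exact ⟨h1, h0⟩)

lemma eval_lf (u v a b : ℂ) : eval ![u, v] (lf a b) = a * u + b * v := by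
  simp [lf]

lemma coeff_lf_pow (a b : ℂ) {d k : ℕ} (hk : k ≤ d) :
    ((lf a b) ^ d).coeff (ex d k) = (d.choose k : ℂ) * a ^ (d - k) * b ^ k := by
  have hh : ((lf a b) ^ d).IsHomogeneous d := by
    simpa using (lf_homog a b).pow d
  rw [bridge hh hk, map_pow, theta_lf, coeff_CXC_pow, Nat.choose_symm hk,
    Nat.sub_sub_self hk]

/-- The apolar-type pairing against (the coefficients of) a form `g`. -/
noncomputable def pairw (d : ℕ) (g : MvPolynomial (Fin 2) ℂ) :
    (Fin (d + 1) → ℂ) →ₗ[ℂ] ℂ where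
  toFun v := ∑ k : Fin (d + 1),
    ((k : ℕ).factorial * (d - (k : ℕ)).factorial : ℂ) * g.coeff (ex d (k : ℕ)) * v k
  map_add' x y := by
    simp only [Pi.add_apply, mul_add]
    exact Finset.sum_add_distrib
  map_smul' c x := by
    simp only [Pi.smul_apply, smul_eq_mul, RingHom.id_apply, Finset.mul_sum]
    exact Finset.sum_congr rfl fun k _ => by ring

/-- coefficient vector of a polynomial -/
noncomputable def cv (d : ℕ) (G : MvPolynomial (Fin 2) ℂ) : Fin (d + 1) → ℂ :=
  fun k => G.coeff (ex d (k : ℕ))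

lemma pairw_power {d : ℕ} {G : MvPolynomial (Fin 2) ℂ} (hG : G.IsHomogeneous d) (a b : ℂ) :
    pairw d G (cv d ((lf a b) ^ d)) = (d.factorial : ℂ) * eval ![a, b] G := by
  rw [eval_homog hG, Finset.mul_sum, Finset.sum_range]
  show (∑ k : Fin (d+1), _) = _
  refine Finset.sum_congr rfl fun k _ => ?_
  have hk : (k : ℕ) ≤ d := Nat.lt_succ_iff.mp k.isLt
  rw [cv, coeff_lf_pow a b hk]
  have hfac : ((d.choose (k:ℕ)) * (k:ℕ).factorial * (d - (k:ℕ)).factorial : ℕ) = d.factorial :=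
    Nat.choose_mul_factorial_mul_factorial hk
  have hfacC : ((d.choose (k:ℕ)) * (k:ℕ).factorial * (d - (k:ℕ)).factorial : ℂ) = (d.factorial : ℂ) := by
    push_cast [← hfac]; ring
  calc ((k:ℕ).factorial * (d - (k:ℕ)).factorial : ℂ) * G.coeff (ex d (k:ℕ)) *
        ((d.choose (k:ℕ) : ℂ) * a ^ (d - (k:ℕ)) * b ^ (k:ℕ))
      = (((d.choose (k:ℕ)) : ℂ) * (k:ℕ).factorial * (d - (k:ℕ)).factorial) *
        (G.coeff (ex d (k:ℕ)) * a ^ (d - (k:ℕ)) * b ^ (k:ℕ)) := by ring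
    _ = _ := by rw [hfacC]

/-- The product form `∏ (bᵢ x - aᵢ y)` attached to points. -/
noncomputable def Gform {d : ℕ} (p : Fin d → ℂ × ℂ) : MvPolynomial (Fin 2) ℂ :=
  ∏ i, lf (p i).2 (-(p i).1)

lemma Gform_homog {d : ℕ} (p : Fin d → ℂ × ℂ) : (Gform p).IsHomogeneous d := by
  have := IsHomogeneous.prod Finset.univ (fun i => lf (p i).2 (-(p i).1)) (fun _ => 1)
    (fun i _ => lf_homog _ _)
  simpa [Gform] using this

lemma eval_Gform {d : ℕ} (p : Fin d → ℂ × ℂ) (a b : ℂ) :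
    eval ![a, b] (Gform p) = ∏ i, ((p i).2 * a - (p i).1 * b) := by
  rw [Gform, map_prod]
  exact Finset.prod_congr rfl fun i _ => by rw [eval_lf]; ring

lemma Gform_ne_zero {d : ℕ} {p : Fin d → ℂ × ℂ} (hnz : ∀ i, p i ≠ 0) : Gform p ≠ 0 := by
  rw [Gform]
  refine Finset.prod_ne_zero_iff.mpr fun i _ => lf_ne_zero ?_
  intro hc
  apply hnz i
  rw [Prod.ext_iff] at hc ⊢
  simp only [Prod.fst_zero, Prod.snd_zero] at hc ⊢
  exact ⟨by simpa using hc.2, hc.1⟩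

open ComplexConjugate in
lemma pairw_ne_zero {d : ℕ} {G : MvPolynomial (Fin 2) ℂ} (hG : G.IsHomogeneous d)
    (hG0 : G ≠ 0) : pairw d G ≠ 0 := by
  -- find a nonzero coefficient
  have hex : ∃ k : Fin (d + 1), G.coeff (ex d (k : ℕ)) ≠ 0 := by
    by_contra hall
    push_neg at hall
    apply hG0
    rw [decomp hG]
    refine Finset.sum_eq_zero fun k hk => ?_
    have hk' : k ≤ d := Nat.lt_succ_iff.mp (Finset.mem_range.mp hk)
    rw [hall ⟨k, Nat.lt_succ_of_le hk'⟩, map_zero]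
  obtain ⟨k0, hk0⟩ := hex
  intro hphi
  have h := congrFun (congrArg DFunLike.coe hphi) (fun k : Fin (d+1) => conj (G.coeff (ex d (k : ℕ))))
  simp only [LinearMap.zero_apply] at h
  rw [pairw] at h
  simp only [LinearMap.coe_mk, AddHom.coe_mk] at h
  have hterm : ∀ k : Fin (d + 1),
      ((k : ℕ).factorial * (d - (k : ℕ)).factorial : ℂ) * G.coeff (ex d (k : ℕ)) *
        conj (G.coeff (ex d (k : ℕ)))
      = (((k : ℕ).factorial * (d - (k : ℕ)).factorial : ℝ) *
          Complex.normSq (G.coeff (ex d (k : ℕ))) : ℝ) := by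
    intro k
    rw [mul_assoc, Complex.mul_conj]
    push_cast
    ring
  rw [Finset.sum_congr rfl (fun k _ => hterm k)] at h
  rw [← Complex.ofReal_sum] at h
  rw [Complex.ofReal_eq_zero] at h
  have hpos : 0 < ∑ k : Fin (d + 1),
      (((k : ℕ).factorial * (d - (k : ℕ)).factorial : ℝ) *
        Complex.normSq (G.coeff (ex d (k : ℕ)))) := by
    refine Finset.sum_pos' (fun k _ => ?_) ⟨k0, Finset.mem_univ _, ?_⟩
    · exact mul_nonneg (by positivity) (Complex.normSq_nonneg _)
    · have h2 : 0 < Complex.normSq (G.coeff (ex d (k0 : ℕ))) := by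
        rwa [Complex.normSq_pos]
      exact mul_pos (by positivity) h2
  exact hpos.ne' h

lemma pairw_Gform_kill {d : ℕ} (p : Fin d → ℂ × ℂ) (i : Fin d) :
    pairw d (Gform p) (cv d ((lf (p i).1 (p i).2) ^ d)) = 0 := by
  rw [pairw_power (Gform_homog p), eval_Gform]
  rw [Finset.prod_eq_zero (Finset.mem_univ i) (by ring)]
  ring

open ComplexConjugate in
lemma indep {d : ℕ} (p : Fin d → ℂ × ℂ) (hnz : ∀ i, p i ≠ 0)
    (hcross : ∀ i j, i ≠ j → (p i).1 * (p j).2 ≠ (p j).1 * (p i).2) :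
    LinearIndependent ℂ (fun i => cv d ((lf (p i).1 (p i).2) ^ d)) := by
  rw [Fintype.linearIndependent_iff]
  intro c hc i0
  classical
  set H : MvPolynomial (Fin 2) ℂ :=
    (∏ j ∈ Finset.univ.erase i0, lf (p j).2 (-(p j).1)) *
      lf (conj (p i0).1) (conj (p i0).2) with hHdef
  have hd1 : (d - 1) + 1 = d := Nat.succ_pred_eq_of_pos i0.pos
  have hH : H.IsHomogeneous d := by
    have h1 := IsHomogeneous.prod (Finset.univ.erase i0)
      (fun j => lf (p j).2 (-(p j).1)) (fun _ => 1) (fun i _ => lf_homog _ _)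
    have hcard : ∑ _j ∈ Finset.univ.erase i0, 1 = d - 1 := by
      rw [Finset.sum_const, Finset.card_erase_of_mem (Finset.mem_univ _)]
      simp
    rw [hcard] at h1
    have h2 := h1.mul (lf_homog (conj (p i0).1) (conj (p i0).2))
    rwa [hd1] at h2
  have h0 : pairw d H (∑ i, c i • cv d ((lf (p i).1 (p i).2) ^ d)) = 0 := by
    rw [hc, map_zero]
  rw [map_sum] at h0
  simp only [map_smul, smul_eq_mul] at h0
  have hterm : ∀ i : Fin d,
      pairw d H (cv d ((lf (p i).1 (p i).2) ^ d))
        = (d.factorial : ℂ) *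
          ((∏ j ∈ Finset.univ.erase i0, ((p j).2 * (p i).1 - (p j).1 * (p i).2)) *
            (conj (p i0).1 * (p i).1 + conj (p i0).2 * (p i).2)) := by
    intro i
    rw [pairw_power hH, hHdef, map_mul, map_prod, eval_lf]
    congr 1
    congr 1
    exact Finset.prod_congr rfl fun j _ => by rw [eval_lf]; ring
  rw [Finset.sum_congr rfl (fun i _ => by rw [hterm i])] at h0
  rw [Finset.sum_eq_single i0] at h0
  · -- conclude c i0 = 0
    have hev : (∏ j ∈ Finset.univ.erase i0, ((p j).2 * (p i0).1 - (p j).1 * (p i0).2)) *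
        (conj (p i0).1 * (p i0).1 + conj (p i0).2 * (p i0).2) ≠ 0 := by
      apply mul_ne_zero
      · refine Finset.prod_ne_zero_iff.mpr fun j hj => ?_
        have hji : j ≠ i0 := (Finset.mem_erase.mp hj).1
        have := hcross i0 j (Ne.symm hji)
        intro hc0
        apply this
        have : (p j).2 * (p i0).1 = (p j).1 * (p i0).2 := by linear_combination hc0
        linear_combination this
      · have h1 : conj (p i0).1 * (p i0).1 + conj (p i0).2 * (p i0).2
            = ((Complex.normSq (p i0).1 + Complex.normSq (p i0).2 : ℝ) : ℂ) := by
          rw [← Complex.normSq_eq_conj_mul_self, ← Complex.normSq_eq_conj_mul_self]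
          push_cast
          ring
        rw [h1]
        rw [Complex.ofReal_ne_zero]
        have := hnz i0
        intro hs
        apply this
        have h2 : Complex.normSq (p i0).1 = 0 ∧ Complex.normSq (p i0).2 = 0 := by
          constructor <;> nlinarith [Complex.normSq_nonneg (p i0).1, Complex.normSq_nonneg (p i0).2]
        rw [Prod.ext_iff]
        exact ⟨Complex.normSq_eq_zero.mp h2.1, Complex.normSq_eq_zero.mp h2.2⟩
    have hfac : (d.factorial : ℂ) ≠ 0 := by
      exact_mod_cast Nat.cast_ne_zero.mpr d.factorial_ne_zero
    rcases mul_eq_zero.mp h0 with h | h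
    · exact h
    · exact absurd h (mul_ne_zero hfac hev)
  · intro i _ hii0
    rw [Finset.prod_eq_zero (Finset.mem_erase.mpr ⟨hii0, Finset.mem_univ i⟩) (by ring)]
    ring
  · intro h
    exact absurd (Finset.mem_univ i0) h

theorem repr_of_kill {d : ℕ} {F : MvPolynomial (Fin 2) ℂ} (hF : F.IsHomogeneous d)
    (p : Fin d → ℂ × ℂ) (hnz : ∀ i, p i ≠ 0)
    (hcross : ∀ i j, i ≠ j → (p i).1 * (p j).2 ≠ (p j).1 * (p i).2)
    (hker : pairw d (Gform p) (cv d F) = 0) :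
    ∃ c : Fin d → ℂ, F = ∑ i, c i • (lf (p i).1 (p i).2) ^ d := by
  classical
  have hφ : pairw d (Gform p) ≠ 0 := pairw_ne_zero (Gform_homog p) (Gform_ne_zero hnz)
  set φ := pairw d (Gform p) with hφdef
  obtain ⟨v0, hv0⟩ : ∃ v, φ v ≠ 0 := by
    by_contra hall
    push_neg at hall
    exact hφ (LinearMap.ext fun v => hall v)
  have hrange : LinearMap.range φ = ⊤ := by
    rw [LinearMap.range_eq_top]
    intro z
    exact ⟨(z * (φ v0)⁻¹) • v0, by rw [map_smul, smul_eq_mul]; field_simp⟩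
  have hker_rank : Module.finrank ℂ (LinearMap.ker φ) = d := by
    have h := LinearMap.finrank_range_add_finrank_ker φ
    rw [hrange, finrank_top, Module.finrank_self, Module.finrank_fin_fun] at h
    omega
  have hli := indep p hnz hcross
  set pv := fun i => cv d ((lf (p i).1 (p i).2) ^ d) with hpvdef
  have hsub : Submodule.span ℂ (Set.range pv) ≤ LinearMap.ker φ := by
    rw [Submodule.span_le]
    rintro _ ⟨i, rfl⟩
    exact LinearMap.mem_ker.mpr (pairw_Gform_kill p i)
  have hspanrank : Module.finrank ℂ (Submodule.span ℂ (Set.range pv)) = d := by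
    rw [finrank_span_eq_card hli]
    simp
  have heq := Submodule.eq_of_le_of_finrank_le hsub (by rw [hker_rank, hspanrank])
  have hmem : cv d F ∈ Submodule.span ℂ (Set.range pv) := by
    rw [heq]
    exact LinearMap.mem_ker.mpr hker
  rw [Submodule.mem_span_range_iff_exists_fun] at hmem
  obtain ⟨c, hcmem⟩ := hmem
  refine ⟨c, ?_⟩
  set S := ∑ i, c i • (lf (p i).1 (p i).2) ^ d with hSdef
  have hRhomog : S.IsHomogeneous d := by
    refine IsHomogeneous.sum _ _ _ fun i _ => ?_
    rw [← mem_homogeneousSubmodule]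
    refine Submodule.smul_mem _ _ ?_
    rw [mem_homogeneousSubmodule]
    have h := (lf_homog (p i).1 (p i).2).pow d
    rwa [one_mul] at h
  have hcoeffs : ∀ k : ℕ, k < d + 1 → S.coeff (ex d k) = F.coeff (ex d k) := by
    intro k hk
    have h := congrFun hcmem ⟨k, hk⟩
    rw [Finset.sum_apply] at h
    simp only [Pi.smul_apply, smul_eq_mul] at h
    rw [hSdef, coeff_sum]
    simp only [coeff_smul, smul_eq_mul]
    exact h
  conv_lhs => rw [decomp hF]
  conv_rhs => rw [decomp hRhomog]
  refine Finset.sum_congr rfl fun k hk => ?_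
  rw [hcoeffs k (Finset.mem_range.mp hk)]

/-! ### Univariate genericity machinery -/

/-- The linear functional on degree-`d` univariate coefficient lists given by weights `w`. -/
noncomputable def Sw (d : ℕ) (w : ℕ → ℂ) {A : Type*} [CommRing A] (ρ : ℂ →+* A)
    (P : Polynomial A) : A :=
  ∑ k ∈ Finset.range (d + 1), ρ (w k) * P.coeff (d - k)

lemma Sw_map {d : ℕ} {w : ℕ → ℂ} {A A' : Type*} [CommRing A] [CommRing A']
    (g : A →+* A') (ρ : ℂ →+* A) (P : Polynomial A) :
    g (Sw d w ρ P) = Sw d w (g.comp ρ) (P.map g) := by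
  rw [Sw, map_sum, Sw]
  exact Finset.sum_congr rfl fun k _ => by
    rw [map_mul, Polynomial.coeff_map]; rfl

lemma Sw_congr_rho {d : ℕ} {w : ℕ → ℂ} {A : Type*} [CommRing A] {ρ ρ' : ℂ →+* A}
    (h : ρ = ρ') (P : Polynomial A) : Sw d w ρ P = Sw d w ρ' P := by rw [h]

lemma Sw_linear {d : ℕ} {w : ℕ → ℂ} {A : Type*} [CommRing A] (ρ : ℂ →+* A)
    (s : A) (P : Polynomial A) :
    Sw d w ρ ((Polynomial.X - Polynomial.C s) * P)
      = Sw d w ρ (Polynomial.X * P) - s * Sw d w ρ P := by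
  rw [Sw, Sw, Sw, Finset.mul_sum, ← Finset.sum_sub_distrib]
  refine Finset.sum_congr rfl fun k _ => ?_
  rw [sub_mul, Polynomial.coeff_sub, Polynomial.coeff_C_mul]
  ring

/-- Shorthand: the bivariate polynomial ring, outer variable `T`, inner variable `U`. -/
abbrev BB : Type := Polynomial (Polynomial ℂ)

noncomputable def ρB : ℂ →+* BB := Polynomial.C.comp Polynomial.C

/-- `u + (j+1) t` as an element of `BB`. -/
noncomputable def sB (j : ℕ) : BB :=
  Polynomial.C Polynomial.X + Polynomial.C (Polynomial.C ((j : ℂ) + 1)) * Polynomial.X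

/-- `∏_{j<n} (Z - s_j)`. -/
noncomputable def QB (n : ℕ) : Polynomial BB :=
  ∏ j ∈ Finset.range n, (Polynomial.X - Polynomial.C (sB j))

/-- the `T = 0` evaluation `BB → ℂ[U]`. -/
noncomputable def epsB : BB →+* Polynomial ℂ := Polynomial.evalRingHom 0

/-- full evaluation at `(u, t)`. -/
noncomputable def evB (u t : ℂ) : BB →+* ℂ :=
  (Polynomial.evalRingHom t).comp (Polynomial.mapRingHom (Polynomial.evalRingHom u))

@[simp] lemma epsB_rhoB (a : ℂ) : epsB (ρB a) = Polynomial.C a := by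
  simp [epsB, ρB]

@[simp] lemma epsB_sB (j : ℕ) : epsB (sB j) = Polynomial.X := by
  simp [epsB, sB]

@[simp] lemma evB_rhoB (u t a : ℂ) : evB u t (ρB a) = a := by
  simp [evB, ρB]

@[simp] lemma evB_sB (u t : ℂ) (j : ℕ) : evB u t (sB j) = u + ((j : ℂ) + 1) * t := by
  simp [evB, sB]

@[simp] lemma evB_T (u t : ℂ) : evB u t Polynomial.X = t := by
  simp [evB]

lemma map_epsB_QB (n : ℕ) :
    (QB n).map epsB = (Polynomial.X - Polynomial.C Polynomial.X) ^ n := by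
  rw [QB, Polynomial.map_prod]
  have hfac : ∀ j ∈ Finset.range n, (Polynomial.X - Polynomial.C (sB j)).map epsB
      = Polynomial.X - Polynomial.C Polynomial.X := fun j _ => by
    rw [Polynomial.map_sub, Polynomial.map_X, Polynomial.map_C, epsB_sB]
  rw [Finset.prod_congr rfl hfac, Finset.prod_const, Finset.card_range]

lemma map_evB_QB (u t : ℂ) (n : ℕ) :
    (QB n).map (evB u t)
      = ∏ j ∈ Finset.range n, (Polynomial.X - Polynomial.C (u + ((j : ℂ) + 1) * t)) := by
  rw [QB, Polynomial.map_prod]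
  exact Finset.prod_congr rfl fun j _ => by
    rw [Polynomial.map_sub, Polynomial.map_X, Polynomial.map_C, evB_sB]

/-- the "binomial" polynomial `r(U) = Σ w_k C(d,k) (-U)^k`. -/
noncomputable def rU (d : ℕ) (w : ℕ → ℂ) : Polynomial ℂ :=
  Sw d w Polynomial.C ((Polynomial.X - Polynomial.C Polynomial.X :
    Polynomial (Polynomial ℂ)) ^ d)

lemma rU_ne_zero {d : ℕ} {w : ℕ → ℂ} {m : ℕ} (hm : m ≤ d) (hw : w m ≠ 0) :
    rU d w ≠ 0 := by
  have hcoeff : ∀ k, k ≤ d → Polynomial.C (w k) * ((Polynomial.X - Polynomial.C Polynomial.X :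
      Polynomial (Polynomial ℂ)) ^ d).coeff (d - k)
        = Polynomial.C (w k * (-1 : ℂ) ^ k * (d.choose k : ℂ)) * Polynomial.X ^ k := by
    intro k hk
    have hrw : (Polynomial.X - Polynomial.C Polynomial.X : Polynomial (Polynomial ℂ))
        = Polynomial.X + Polynomial.C (-Polynomial.X) := by
      rw [map_neg]; ring
    rw [hrw, Polynomial.coeff_X_add_C_pow, Nat.choose_symm hk, Nat.sub_sub_self hk, neg_pow]
    rw [← Polynomial.C_eq_natCast]
    rw [Polynomial.C_mul, Polynomial.C_mul, Polynomial.C_pow, Polynomial.C_neg, Polynomial.C_1]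
    ring
  intro h0
  have h := congrArg (fun q => Polynomial.coeff q m) h0
  simp only [Polynomial.coeff_zero] at h
  rw [rU, Sw] at h
  rw [Finset.sum_congr rfl (fun k hk => by
    exact hcoeff k (Nat.lt_succ_iff.mp (Finset.mem_range.mp hk)))] at h
  rw [Polynomial.finset_sum_coeff] at h
  simp only [Polynomial.coeff_C_mul, Polynomial.coeff_X_pow] at h
  rw [Finset.sum_eq_single m] at h
  · rw [if_pos rfl, mul_one] at h
    have hch : (d.choose m : ℂ) ≠ 0 := by
      exact_mod_cast (Nat.choose_pos hm).ne'
    have hneg : ((-1 : ℂ)) ^ m ≠ 0 := pow_ne_zero _ (by norm_num)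
    exact (mul_ne_zero (mul_ne_zero hw hneg) hch) h
  · intro k _ hk
    rw [if_neg (fun hc => hk hc.symm), mul_zero]
  · intro hmem
    exact absurd (Finset.mem_range.mpr (Nat.lt_succ_of_le hm)) hmem

noncomputable def xA (d n : ℕ) (w : ℕ → ℂ) : BB := Sw d w ρB (Polynomial.X * QB n)
noncomputable def yA (d n : ℕ) (w : ℕ → ℂ) : BB := Sw d w ρB (QB n)
noncomputable def delB (d n : ℕ) (w : ℕ → ℂ) (j : ℕ) : BB :=
  xA d n w - sB j * yA d n w

lemma rhoB_eps : epsB.comp ρB = (Polynomial.C : ℂ →+* Polynomial ℂ) :=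
  RingHom.ext epsB_rhoB

lemma rhoB_ev (u t : ℂ) : (evB u t).comp ρB = RingHom.id ℂ :=
  RingHom.ext (evB_rhoB u t)

lemma epsB_delB {d n : ℕ} (hdn : n + 1 = d) (w : ℕ → ℂ) (j : ℕ) :
    epsB (delB d n w j) = rU d w := by
  rw [delB, map_sub, map_mul, epsB_sB, xA, yA, Sw_map, Sw_map]
  rw [Sw_congr_rho rhoB_eps, Sw_congr_rho rhoB_eps]
  rw [Polynomial.map_mul, Polynomial.map_X, map_epsB_QB]
  rw [← Sw_linear, rU]
  congr 1
  rw [← hdn, pow_succ]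
  ring

lemma exists_point {Γ : BB} (h : Γ ≠ 0) : ∃ u t : ℂ, evB u t Γ ≠ 0 := by
  obtain ⟨j, hj⟩ : ∃ j, Γ.coeff j ≠ 0 := by
    by_contra hall
    push_neg at hall
    exact h (Polynomial.ext fun j => by rw [hall j, Polynomial.coeff_zero])
  obtain ⟨u, hu⟩ : ∃ u, Polynomial.eval u (Γ.coeff j) ≠ 0 := by
    by_contra hall
    push_neg at hall
    exact hj (Polynomial.zero_of_eval_zero _ hall)
  set Γ' := Γ.map (Polynomial.evalRingHom u) with hΓ'
  have hΓ'0 : Γ' ≠ 0 := by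
    intro hc
    apply hu
    have := congrArg (fun q => Polynomial.coeff q j) hc
    simpa [hΓ', Polynomial.coeff_map] using this
  obtain ⟨t, ht⟩ : ∃ t, Polynomial.eval t Γ' ≠ 0 := by
    by_contra hall
    push_neg at hall
    exact hΓ'0 (Polynomial.zero_of_eval_zero _ hall)
  exact ⟨u, t, by simpa [evB, hΓ'] using ht⟩

theorem exists_good_points {d : ℕ} (hd2 : 2 ≤ d) (w : ℕ → ℂ) {m : ℕ} (hm : m ≤ d)
    (hw : w m ≠ 0) :
    ∃ p : Fin d → ℂ × ℂ, (∀ i, p i ≠ 0) ∧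
      (∀ i j, i ≠ j → (p i).1 * (p j).2 ≠ (p j).1 * (p i).2) ∧
      Sw d w (RingHom.id ℂ) (theta (Gform p)) = 0 := by
  obtain ⟨n, rfl⟩ : ∃ n, d = n + 1 := ⟨d - 1, by omega⟩
  have hn1 : 1 ≤ n := by omega
  have hrU : rU (n + 1) w ≠ 0 := rU_ne_zero hm hw
  have hdelB : ∀ j : ℕ, delB (n + 1) n w j ≠ 0 := fun j hc => by
    apply hrU
    rw [← epsB_delB rfl w j, hc, map_zero]
  have hΓ : (Polynomial.X * ∏ j ∈ Finset.range n, delB (n + 1) n w j : BB) ≠ 0 :=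
    mul_ne_zero Polynomial.X_ne_zero (Finset.prod_ne_zero_iff.mpr fun j _ => hdelB j)
  obtain ⟨u, t, hev⟩ := exists_point hΓ
  rw [map_mul, map_prod, evB_T] at hev
  set sc : ℕ → ℂ := fun j => u + ((j : ℂ) + 1) * t with hsc
  set Qc : Polynomial ℂ :=
    ∏ j ∈ Finset.range n, (Polynomial.X - Polynomial.C (sc j)) with hQcdef
  set xa : ℂ := Sw (n + 1) w (RingHom.id ℂ) (Polynomial.X * Qc) with hxadef
  set ya : ℂ := Sw (n + 1) w (RingHom.id ℂ) Qc with hyadef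
  have hQc : (QB n).map (evB u t) = Qc := map_evB_QB u t n
  have hxa : evB u t (xA (n + 1) n w) = xa := by
    rw [xA, Sw_map, Sw_congr_rho (rhoB_ev u t), Polynomial.map_mul, Polynomial.map_X, hQc]
  have hya : evB u t (yA (n + 1) n w) = ya := by
    rw [yA, Sw_map, Sw_congr_rho (rhoB_ev u t), hQc]
  have hdel : ∀ j : ℕ, evB u t (delB (n + 1) n w j) = xa - sc j * ya := fun j => by
    rw [delB, map_sub, map_mul, evB_sB, hxa, hya]
  have ht : t ≠ 0 := fun hc => hev (by rw [hc, zero_mul])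
  have hδ : ∀ j ∈ Finset.range n, xa - sc j * ya ≠ 0 := by
    intro j hj hc
    apply hev
    rw [Finset.prod_eq_zero hj (by rw [hdel j, hc]), mul_zero]
  have hscinj : ∀ j1 j2 : ℕ, j1 ≠ j2 → sc j1 ≠ sc j2 := by
    intro j1 j2 hne hc
    rw [hsc] at hc
    simp only [add_right_inj] at hc
    have := mul_right_cancel₀ ht hc
    have : (j1 : ℂ) = (j2 : ℂ) := by linear_combination this
    exact hne (Nat.cast_inj.mp this)
  set p : Fin (n + 1) → ℂ × ℂ := Fin.snoc (fun j : Fin n => (sc j, 1)) (xa, ya) with hpdef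
  have hplast : p (Fin.last n) = (xa, ya) := by rw [hpdef, Fin.snoc_last]
  have hpcast : ∀ j : Fin n, p j.castSucc = (sc j, 1) := fun j => by
    rw [hpdef, Fin.snoc_castSucc]
  refine ⟨p, ?_, ?_, ?_⟩
  · intro i
    induction i using Fin.lastCases with
    | last =>
      rw [hplast]
      intro hc
      rw [Prod.mk_eq_zero] at hc
      exact hδ 0 (Finset.mem_range.mpr hn1) (by rw [hc.1, hc.2]; ring)
    | cast j =>
      rw [hpcast j]
      intro hc
      rw [Prod.mk_eq_zero] at hc
      exact one_ne_zero hc.2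
  · intro i j hij
    induction i using Fin.lastCases with
    | last =>
      induction j using Fin.lastCases with
      | last => exact absurd rfl hij
      | cast j' =>
        rw [hplast, hpcast j']
        intro hc
        exact hδ j' (Finset.mem_range.mpr j'.isLt) (by linear_combination hc)
    | cast i' =>
      induction j using Fin.lastCases with
      | last =>
        rw [hplast, hpcast i']
        intro hc
        exact hδ i' (Finset.mem_range.mpr i'.isLt) (by linear_combination -hc)
      | cast j' =>
        rw [hpcast i', hpcast j']
        simp only [mul_one]
        have hne : (i' : ℕ) ≠ (j' : ℕ) := by
          intro hc
          exact hij (by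
            have : i' = j' := Fin.ext hc
            rw [this])
        exact hscinj _ _ hne
  · have h1 : ∀ j : Fin n, theta (lf (p j.castSucc).2 (-(p j.castSucc).1))
        = Polynomial.X - Polynomial.C (sc j) := fun j => by
      rw [hpcast j, theta_lf]
      simp only [Polynomial.C_1, one_mul, map_neg]
      ring
    have hθ : theta (Gform p)
        = Qc * (Polynomial.C ya * Polynomial.X - Polynomial.C xa) := by
      rw [Gform, map_prod, Fin.prod_univ_castSucc]
      congr 1
      · rw [Finset.prod_congr rfl (fun j _ => h1 j),
          Fin.prod_univ_eq_prod_range (fun j => Polynomial.X - Polynomial.C (sc j)) n]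
      · rw [hplast, theta_lf, map_neg]
        ring
    rw [hθ]
    have hexp : Qc * (Polynomial.C ya * Polynomial.X - Polynomial.C xa)
        = Polynomial.C ya * (Polynomial.X * Qc) - Polynomial.C xa * Qc := by ring
    rw [hexp, Sw]
    have hterm : ∀ k ∈ Finset.range (n + 1 + 1), (RingHom.id ℂ) (w k) *
        (Polynomial.C ya * (Polynomial.X * Qc) - Polynomial.C xa * Qc).coeff (n + 1 - k)
        = ya * ((RingHom.id ℂ) (w k) * (Polynomial.X * Qc).coeff (n + 1 - k))
          - xa * ((RingHom.id ℂ) (w k) * Qc.coeff (n + 1 - k)) := by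
      intro k _
      rw [Polynomial.coeff_sub, Polynomial.coeff_C_mul, Polynomial.coeff_C_mul]
      ring
    rw [Finset.sum_congr rfl hterm, Finset.sum_sub_distrib, ← Finset.mul_sum, ← Finset.mul_sum]
    rw [hxadef, hyadef, Sw, Sw]
    ring

theorem main_repr {d : ℕ} (hd2 : 2 ≤ d) (F : MvPolynomial (Fin 2) ℂ) (hF0 : F ≠ 0)
    (hF : F.IsHomogeneous d) :
    ∃ L : Fin d → MvPolynomial (Fin 2) ℂ,
      (∀ i, (L i).IsHomogeneous 1) ∧ F = ∑ i, (L i) ^ d := by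
  classical
  set w : ℕ → ℂ := fun k => (k.factorial : ℂ) * ((d - k).factorial : ℂ) * F.coeff (ex d k)
    with hwdef
  obtain ⟨m, hm, hwm⟩ : ∃ m, m ≤ d ∧ w m ≠ 0 := by
    by_contra hall
    push_neg at hall
    apply hF0
    rw [decomp hF]
    refine Finset.sum_eq_zero fun k hk => ?_
    have hk' : k ≤ d := Nat.lt_succ_iff.mp (Finset.mem_range.mp hk)
    have hwk := hall k hk'
    rw [hwdef] at hwk
    have hfac : (k.factorial : ℂ) * ((d - k).factorial : ℂ) ≠ 0 :=
      mul_ne_zero (Nat.cast_ne_zero.mpr k.factorial_ne_zero)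
        (Nat.cast_ne_zero.mpr (d - k).factorial_ne_zero)
    have hco : F.coeff (ex d k) = 0 := by
      rcases mul_eq_zero.mp hwk with h | h
      · exact absurd h hfac
      · exact h
    rw [hco, map_zero]
  obtain ⟨p, hnz, hcross, hsum⟩ := exists_good_points hd2 w hm hwm
  have hker : pairw d (Gform p) (cv d F) = 0 := by
    have hfin : pairw d (Gform p) (cv d F)
        = ∑ k ∈ Finset.range (d + 1),
          (k.factorial : ℂ) * ((d - k).factorial : ℂ) * (Gform p).coeff (ex d k) *
            F.coeff (ex d k) := by
      show (∑ k : Fin (d + 1), ((k : ℕ).factorial : ℂ) * (((d - (k : ℕ)).factorial : ℕ) : ℂ) *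
        (Gform p).coeff (ex d (k : ℕ)) * F.coeff (ex d (k : ℕ))) = _
      rw [Fin.sum_univ_eq_sum_range (fun k => (k.factorial : ℂ) * ((d - k).factorial : ℂ) *
        (Gform p).coeff (ex d k) * F.coeff (ex d k)) (d + 1)]
    rw [hfin]
    rw [← hsum, Sw]
    refine Finset.sum_congr rfl fun k hk => ?_
    have hk' : k ≤ d := Nat.lt_succ_iff.mp (Finset.mem_range.mp hk)
    rw [← bridge (Gform_homog p) hk']
    rw [hwdef]
    simp only [RingHom.id_apply]
    ring
  obtain ⟨c, hc⟩ := repr_of_kill hF p hnz hcross hker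
  have hd0 : 0 < d := by omega
  have hroot : ∀ i : Fin d, ∃ z : ℂ, z ^ d = c i := fun i =>
    IsAlgClosed.exists_pow_nat_eq (c i) hd0
  choose z hz using hroot
  refine ⟨fun i => C (z i) * lf (p i).1 (p i).2, fun i => ?_, ?_⟩
  · simpa using (isHomogeneous_C (Fin 2) (z i)).mul (lf_homog (p i).1 (p i).2)
  · rw [hc]
    refine Finset.sum_congr rfl fun i _ => ?_
    rw [mul_pow, ← C_pow, hz i, smul_eq_C_mul]

end WaringAux

/-- A nonzero binary form of degree `d ≥ 1` has Waring rank at most `d`. -/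
theorem stmt5 (d : ℕ) (hd : 1 ≤ d)
    (F : MvPolynomial (Fin 2) ℂ) (hF0 : F ≠ 0) (hF : F.IsHomogeneous d) :
    waringRank d F ≤ d := by
  rcases eq_or_lt_of_le hd with h1 | h2
  · apply Nat.sInf_le
    refine ⟨fun _ : Fin d => F, fun _ => ?_, ?_⟩
    · rw [← h1] at hF
      exact hF
    · rw [← h1]
      simp
  · apply Nat.sInf_le
    obtain ⟨L, hL1, hL2⟩ := WaringAux.main_repr h2 F hF0 hF
    exact ⟨L, hL1, hL2⟩
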